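/- Let U ⊆ ℝ² be open, β : U → ℝ a positive C¹ function, γ̃ : U → M₂(ℝ) a C¹ map whose values are invertible symmetric matrices, and u₁, u₂ real-valued C² functions on U. Set H_i := β γ̃ ∇u_i for i = 1, 2 and H := [H₁, H₂]. Then at every point x ∈ U where H(x) is invertible, ∇(log β)(x) = − J γ̃(x) (H(x)ᵀ)⁻¹ c(x), where c(x) ∈ ℝ² is the vector with components c_i(x) = curl(γ̃⁻¹ H_i)(x) for i = 1, 2. -/

import Mathlib

open Matrix

/-- The gradient of a real-valued function on ℝ², as a vector of partial derivatives. -/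
noncomputable def grad (u : (Fin 2 → ℝ) → ℝ) (x : Fin 2 → ℝ) : Fin 2 → ℝ :=
  fun i => fderiv ℝ u x (Pi.single i 1)

/-- The 2×2 matrix with columns `a` and `b`. -/
def col2 (a b : Fin 2 → ℝ) : Matrix (Fin 2) (Fin 2) ℝ :=
  Matrix.of fun i => ![a i, b i]

/-- The rotation matrix `J = e₂⊗e₁ − e₁⊗e₂`, i.e. `Jv = (−v₂, v₁)`. -/
def J2 : Matrix (Fin 2) (Fin 2) ℝ := !![0, -1; 1, 0]

/-- The scalar 2D curl `∂₁F₂ − ∂₂F₁` of a vector field `F` on ℝ². -/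
noncomputable def curl2 (F : (Fin 2 → ℝ) → Fin 2 → ℝ) (x : Fin 2 → ℝ) : ℝ :=
  fderiv ℝ (fun y => F y 1) x (Pi.single 0 1) - fderiv ℝ (fun y => F y 0) x (Pi.single 1 1)

/-- Explicit reconstruction formula (3.1) for the isotropic part `β` of a conductivity
`γ = βγ̃` from two internal current densities `Hᵢ = γ∇uᵢ`:
`∇ log β = −Jγ̃ H⁻ᵀ (curl(γ̃⁻¹H₁), curl(γ̃⁻¹H₂))` wherever `H = [H₁, H₂]` is invertible. -/
theorem stmt2 (U : Set (Fin 2 → ℝ)) (hU : IsOpen U)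
    (β : (Fin 2 → ℝ) → ℝ) (hβC : ContDiffOn ℝ 1 β U) (hβpos : ∀ x ∈ U, 0 < β x)
    (γt : (Fin 2 → ℝ) → Matrix (Fin 2) (Fin 2) ℝ)
    (hγtC : ∀ i j, ContDiffOn ℝ 1 (fun x => γt x i j) U)
    (hγtsymm : ∀ x ∈ U, (γt x).IsSymm) (hγtinv : ∀ x ∈ U, IsUnit (γt x).det)
    (u₁ u₂ : (Fin 2 → ℝ) → ℝ)
    (hu₁ : ContDiffOn ℝ 2 u₁ U) (hu₂ : ContDiffOn ℝ 2 u₂ U)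
    (H₁ H₂ : (Fin 2 → ℝ) → Fin 2 → ℝ)
    (hH₁ : ∀ x ∈ U, H₁ x = (β x • γt x).mulVec (grad u₁ x))
    (hH₂ : ∀ x ∈ U, H₂ x = (β x • γt x).mulVec (grad u₂ x)) :
    ∀ x ∈ U, (col2 (H₁ x) (H₂ x)).det ≠ 0 →
      grad (fun y => Real.log (β y)) x =
        (-(J2 * γt x * ((col2 (H₁ x) (H₂ x))ᵀ)⁻¹)).mulVec
          ![curl2 (fun y => (γt y)⁻¹.mulVec (H₁ y)) x,
            curl2 (fun y => (γt y)⁻¹.mulVec (H₂ y)) x] := by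
  intro x hx hdet
  have hxU : U ∈ nhds x := hU.mem_nhds hx
  have hb : β x ≠ 0 := (hβpos x hx).ne'
  have hβd : DifferentiableAt ℝ β x := (hβC.contDiffAt hxU).differentiableAt one_ne_zero
  -- gradient of log β
  have hlog : grad (fun y => Real.log (β y)) x
      = fun i => (β x)⁻¹ * fderiv ℝ β x (Pi.single i 1) := by
    have h := (Real.hasDerivAt_log hb).comp_hasFDerivAt x hβd.hasFDerivAt
    funext i
    have : grad (fun y => Real.log (β y)) x i
        = fderiv ℝ (Real.log ∘ β) x (Pi.single i 1) := rfl
    rw [this, h.fderiv]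
    simp
  -- the curl computation
  have key : ∀ (u : (Fin 2 → ℝ) → ℝ) (H : (Fin 2 → ℝ) → Fin 2 → ℝ),
      ContDiffOn ℝ 2 u U → (∀ y ∈ U, H y = (β y • γt y).mulVec (grad u y)) →
      curl2 (fun y => (γt y)⁻¹.mulVec (H y)) x
        = fderiv ℝ β x (Pi.single 0 1) * grad u x 1
          - fderiv ℝ β x (Pi.single 1 1) * grad u x 0 := by
    intro u H hu hH
    have hC2 : ContDiffAt ℝ 2 u x := hu.contDiffAt hxU
    have hf' : ContDiffAt ℝ 1 (fderiv ℝ u) x := hC2.fderiv_right (by norm_num)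
    have hDd : DifferentiableAt ℝ (fderiv ℝ u) x := hf'.differentiableAt one_ne_zero
    have hDj : ∀ j : Fin 2, DifferentiableAt ℝ (fun y => fderiv ℝ u y (Pi.single j 1)) x := by
      intro j
      exact (ContinuousLinearMap.apply ℝ ℝ (Pi.single j 1 : Fin 2 → ℝ)).differentiableAt.comp x hDd
    have hDfd : ∀ j k : Fin 2,
        fderiv ℝ (fun y => fderiv ℝ u y (Pi.single j 1)) x (Pi.single k 1)
          = fderiv ℝ (fderiv ℝ u) x (Pi.single k 1) (Pi.single j 1) := by
      intro j k
      have h := ((ContinuousLinearMap.apply ℝ ℝ ((Pi.single j 1 : Fin 2 → ℝ))).hasFDerivAt.comp x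
        hDd.hasFDerivAt).fderiv
      have h2 : fderiv ℝ (fun y => fderiv ℝ u y (Pi.single j 1)) x
          = ((ContinuousLinearMap.apply ℝ ℝ ((Pi.single j 1 : Fin 2 → ℝ))).comp
              (fderiv ℝ (fderiv ℝ u) x)) := h
      rw [h2]
      simp
    have hsym := hC2.isSymmSndFDerivAt (by simp)
    -- eventual equality of γ̃⁻¹H with β ∇u
    have hev : ∀ j : Fin 2, (fun y => (γt y)⁻¹.mulVec (H y) j)
        =ᶠ[nhds x] fun y => β y * fderiv ℝ u y (Pi.single j 1) := by
      intro j
      filter_upwards [hxU] with y hy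
      rw [hH y hy, Matrix.smul_mulVec, Matrix.mulVec_smul, Matrix.mulVec_mulVec,
        Matrix.nonsing_inv_mul _ (hγtinv y hy), Matrix.one_mulVec]
      simp [grad]
    have hmul : ∀ j k : Fin 2,
        fderiv ℝ (fun y => β y * fderiv ℝ u y (Pi.single j 1)) x (Pi.single k 1)
          = fderiv ℝ β x (Pi.single k 1) * fderiv ℝ u x (Pi.single j 1)
            + β x * fderiv ℝ (fderiv ℝ u) x (Pi.single k 1) (Pi.single j 1) := by
      intro j k
      rw [fderiv_fun_mul hβd (hDj j)]
      simp only [ContinuousLinearMap.add_apply, ContinuousLinearMap.smul_apply, smul_eq_mul,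
        hDfd j k]
      ring
    have e0 : fderiv ℝ (fun y => (γt y)⁻¹.mulVec (H y) 1) x (Pi.single 0 1)
        = fderiv ℝ β x (Pi.single 0 1) * fderiv ℝ u x (Pi.single 1 1)
          + β x * fderiv ℝ (fderiv ℝ u) x (Pi.single 0 1) (Pi.single 1 1) := by
      rw [(hev 1).fderiv_eq]; exact hmul 1 0
    have e1 : fderiv ℝ (fun y => (γt y)⁻¹.mulVec (H y) 0) x (Pi.single 1 1)
        = fderiv ℝ β x (Pi.single 1 1) * fderiv ℝ u x (Pi.single 0 1)
          + β x * fderiv ℝ (fderiv ℝ u) x (Pi.single 1 1) (Pi.single 0 1) := by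
      rw [(hev 0).fderiv_eq]; exact hmul 0 1
    have : curl2 (fun y => (γt y)⁻¹.mulVec (H y)) x
        = fderiv ℝ (fun y => (γt y)⁻¹.mulVec (H y) 1) x (Pi.single 0 1)
          - fderiv ℝ (fun y => (γt y)⁻¹.mulVec (H y) 0) x (Pi.single 1 1) := rfl
    rw [this, e0, e1, hsym (Pi.single 0 1) (Pi.single 1 1)]
    simp only [grad]
    ring
  have hc1 := key u₁ H₁ hu₁ hH₁
  have hc2 := key u₂ H₂ hu₂ hH₂
  rw [hlog, hc1, hc2, hH₁ x hx, hH₂ x hx]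
  rw [hH₁ x hx, hH₂ x hx] at hdet
  -- pure linear algebra now
  have hg : γt x 1 0 = γt x 0 1 := (hγtsymm x hx).apply 0 1
  rw [Matrix.inv_def]
  simp only [Matrix.det_transpose, Ring.inverse_eq_inv']
  simp only [col2, Matrix.det_fin_two, Matrix.mulVec, dotProduct, Fin.sum_univ_two,
    Matrix.smul_apply, smul_eq_mul, Matrix.of_apply, Matrix.cons_val_zero, Matrix.cons_val_one,
    Matrix.head_cons, hg] at hdet
  have hD : -(γt x 0 0 * grad u₂ x 0 * γt x 1 1 * grad u₁ x 1) + γt x 0 0 * γt x 1 1 * grad u₂ x 1 * grad u₁ x 0 +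
      γt x 0 1 ^ 2 * grad u₂ x 0 * grad u₁ x 1 - γt x 0 1 ^ 2 * grad u₂ x 1 * grad u₁ x 0 ≠ 0 := by
    intro h; apply hdet; linear_combination (β x) ^ 2 * h
  funext i
  fin_cases i <;>
  · simp only [col2, J2, Matrix.mulVec, dotProduct, Fin.sum_univ_two, Matrix.mul_apply,
      Matrix.neg_apply, Matrix.smul_apply, Matrix.transpose_apply, Matrix.adjugate_fin_two,
      Matrix.det_fin_two, Matrix.of_apply, Matrix.cons_val_zero, Matrix.cons_val_one,
      Matrix.head_cons, Matrix.cons_val', Matrix.head_fin_const, Matrix.empty_val',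
      Matrix.cons_val_fin_one, smul_eq_mul, Pi.smul_apply, hg, Fin.isValue, Fin.zero_eta,
        Fin.mk_one]
    have hDi := mul_inv_cancel₀ hD
    grind
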